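/- Let Z be a closed linear subspace of a normed space X, let q : X → X/Z be the quotient map onto the quotient normed space, and let A, B be nonempty closed convex subsets of X with Z ⊆ V_A ∩ V_B. Then the images q(A) and q(B) are closed convex subsets of X/Z and d_H(q(A), q(B)) = d_H(A, B), where on the left d_H is the Hausdorff extended metric of the quotient norm on X/Z. -/

import Mathlib

open EMetric Set

section Aux

variable {X : Type*} [NormedAddCommGroup X] [NormedSpace ℝ X]
  (Z : Submodule ℝ X) [IsClosed (Z : Set X)]

lemma sat_preimage (S : Set X) (hsat : ∀ s ∈ S, ∀ z ∈ Z, s + z ∈ S) :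
    Z.mkQ ⁻¹' (Z.mkQ '' S) = S := by
  ext x
  constructor
  · rintro ⟨s, hs, hx⟩
    have hz' : s - x ∈ Z := by
      rwa [Submodule.mkQ_apply, Submodule.mkQ_apply, Submodule.Quotient.eq] at hx
    have hz : x - s ∈ Z := by simpa using Z.neg_mem hz'
    have := hsat s hs (x - s) hz
    simpa using this
  · intro hx
    exact Set.mem_image_of_mem _ hx

lemma infEdist_quot (S : Set X) (hsat : ∀ s ∈ S, ∀ z ∈ Z, s + z ∈ S) (x : X) :
    infEdist (Z.mkQ x) (Z.mkQ '' S) = infEdist x S := by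
  apply le_antisymm
  · rw [infEdist]
    refine le_iInf₂ fun y hy => ?_
    refine le_trans (infEdist_le_edist_of_mem (Set.mem_image_of_mem _ hy)) ?_
    rw [edist_nndist, nndist_eq_nnnorm, edist_nndist, nndist_eq_nnnorm, ← map_sub]
    exact_mod_cast Submodule.Quotient.norm_mk_le Z (x - y)
  · rw [show infEdist (Z.mkQ x) (Z.mkQ '' S) = ⨅ y ∈ S, edist (Z.mkQ x) (Z.mkQ y) by
      rw [infEdist, Metric.infEDist, iInf_image]]
    refine le_iInf₂ fun y hy => ?_
    refine ENNReal.le_of_forall_pos_le_add fun ε hε _ => ?_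
    obtain ⟨m, hm, hmlt⟩ := Submodule.Quotient.norm_mk_lt
      (Z.mkQ (x - y)) (ε := (ε : ℝ)) (by exact_mod_cast hε)
    have hz : m - (x - y) ∈ Z := by
      rw [← Submodule.Quotient.eq]; exact hm
    have hmem : y + -(m - (x - y)) ∈ S := hsat y hy _ (neg_mem hz)
    have hxy : x - (y + -(m - (x - y))) = m := by abel
    calc infEdist x S ≤ edist x (y + -(m - (x - y))) := infEdist_le_edist_of_mem hmem
      _ = ‖m‖₊ := by rw [edist_nndist, nndist_eq_nnnorm, hxy]
      _ ≤ ‖Z.mkQ (x - y)‖₊ + ε := by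
          have h1 : ‖m‖₊ ≤ ‖Z.mkQ (x - y)‖₊ + ε := by
            have := hmlt.le
            rw [← NNReal.coe_le_coe]
            push_cast
            simpa using this
          exact_mod_cast h1
      _ = edist (Z.mkQ x) (Z.mkQ y) + ε := by
          rw [edist_nndist, nndist_eq_nnnorm, ← map_sub]

end Aux

/-- Let `Z` be a closed linear subspace of a normed space `X` and `A, B` nonempty closed
convex subsets of `X` with `Z ⊆ V_A ∩ V_B` (where `V_C` is the characteristic cone of `C`).
Then the images `q(A)`, `q(B)` under the quotient map `q : X → X/Z` are closed convex subsets
of the quotient normed space `X/Z`, and `d_H(q(A), q(B)) = d_H(A, B)`. -/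
theorem hausdorffEdist_quotient
    {X : Type*} [NormedAddCommGroup X] [NormedSpace ℝ X]
    (Z : Submodule ℝ X) (hZ : IsClosed (Z : Set X))
    (A B : Set X) (hAne : A.Nonempty) (hBne : B.Nonempty)
    (hAcl : IsClosed A) (hBcl : IsClosed B)
    (hAco : Convex ℝ A) (hBco : Convex ℝ B)
    (hZA : ∀ z ∈ Z, ∀ c ∈ A, ∀ t : ℝ, 0 ≤ t → c + t • z ∈ A)
    (hZB : ∀ z ∈ Z, ∀ c ∈ B, ∀ t : ℝ, 0 ≤ t → c + t • z ∈ B) :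
    IsClosed (Z.mkQ '' A) ∧ Convex ℝ (Z.mkQ '' A) ∧
      IsClosed (Z.mkQ '' B) ∧ Convex ℝ (Z.mkQ '' B) ∧
      EMetric.hausdorffEdist (Z.mkQ '' A) (Z.mkQ '' B) = EMetric.hausdorffEdist A B := by
  haveI : IsClosed (Z : Set X) := hZ
  have satA : ∀ s ∈ A, ∀ z ∈ Z, s + z ∈ A := fun s hs z hz => by
    simpa using hZA z hz s hs 1 zero_le_one
  have satB : ∀ s ∈ B, ∀ z ∈ Z, s + z ∈ B := fun s hs z hz => by
    simpa using hZB z hz s hs 1 zero_le_one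
  have hqA : IsClosed (Z.mkQ '' A) := by
    rw [← (Z.isOpenQuotientMap_mkQ).isQuotientMap.isClosed_preimage,
      sat_preimage Z A satA]
    exact hAcl
  have hqB : IsClosed (Z.mkQ '' B) := by
    rw [← (Z.isOpenQuotientMap_mkQ).isQuotientMap.isClosed_preimage,
      sat_preimage Z B satB]
    exact hBcl
  refine ⟨hqA, hAco.linear_image Z.mkQ, hqB, hBco.linear_image Z.mkQ, ?_⟩
  rw [EMetric.hausdorffEdist, Metric.hausdorffEDist_def, Metric.hausdorffEDist_def]
  congr 1
  · rw [iSup_image]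
    exact iSup_congr fun a => iSup_congr fun ha => infEdist_quot Z B satB a
  · rw [iSup_image]
    exact iSup_congr fun b => iSup_congr fun hb => infEdist_quot Z A satA b
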